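/- Let 0 ≤ α ≤ 1 and 0 ≤ d ≤ 1, and let S_d = {(x,y) ∈ ℝ² : x ≥ 0, y ≥ 0, x + y ≤ d}. Then the worst-case outer bound on the symmetric diversity–multiplexing tradeoff satisfies inf{ r̄(x₁,y₁,x₂,y₂) : (x₁,y₁) ∈ S_d, (x₂,y₂) ∈ S_d } = min( 1 − d , max( 1 − α/2 − d , (1 − d + α)/4 ) , max( α − d , 1 − α − d , (1 + α − d)/3 ) ). -/
import Mathlib


/-- Per-state symmetric g.d.o.f. `r̄(x₁,y₁,x₂,y₂)` of the two-user interference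
channel with direct fading exponents `x₁,x₂` and cross fading exponents `y₁,y₂`,
achievable when the transmitters know the channel gains. -/
noncomputable def rbar (α x₁ y₁ x₂ y₂ : ℝ) : ℝ :=
  let a11 := max (1 - α - x₁ + y₂) 0
  let a12 := max (1 - x₁) 0
  let a13 := max (max (1 - α - x₁ + y₂) (α - y₁)) 0
  let a14 := max (max (1 - x₁) (α - y₁)) 0
  let a21 := max (1 - α - x₂ + y₁) 0
  let a22 := max (1 - x₂) 0
  let a23 := max (max (1 - α - x₂ + y₁) (α - y₂)) 0
  let a24 := max (max (1 - x₂) (α - y₂)) 0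
  min a12 (min a22 (min ((a11 + a24)/2) (min ((a21 + a14)/2) (min ((a13 + a23)/2)
    (min ((a11 + a14 + a23)/3) ((a21 + a24 + a13)/3))))))

lemma rbar_def (α x₁ y₁ x₂ y₂ : ℝ) : rbar α x₁ y₁ x₂ y₂ =
    min (max (1 - x₁) 0) (min (max (1 - x₂) 0)
      (min ((max (1 - α - x₁ + y₂) 0 + max (max (1 - x₂) (α - y₂)) 0)/2)
      (min ((max (1 - α - x₂ + y₁) 0 + max (max (1 - x₁) (α - y₁)) 0)/2)
      (min ((max (max (1 - α - x₁ + y₂) (α - y₁)) 0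
              + max (max (1 - α - x₂ + y₁) (α - y₂)) 0)/2)
      (min ((max (1 - α - x₁ + y₂) 0 + max (max (1 - x₁) (α - y₁)) 0
              + max (max (1 - α - x₂ + y₁) (α - y₂)) 0)/3)
           ((max (1 - α - x₂ + y₁) 0 + max (max (1 - x₂) (α - y₂)) 0
              + max (max (1 - α - x₁ + y₂) (α - y₁)) 0)/3)))))) := rfl

lemma rbar_nonneg (α x₁ y₁ x₂ y₂ : ℝ) : 0 ≤ rbar α x₁ y₁ x₂ y₂ := by
  rw [rbar_def]; positivity

/-- For `0 ≤ α ≤ 1` and `0 ≤ d ≤ 1`, the worst-case outer bound on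
the symmetric DMT over the no-outage set `S_d × S_d` is
`min(1-d, max(1-α/2-d, (1-d+α)/4), max(α-d, 1-α-d, (1+α-d)/3))`. -/
theorem stmt_11 (α d : ℝ) (hα₁ : 0 ≤ α) (hα₂ : α ≤ 1) (hd₁ : 0 ≤ d) (hd₂ : d ≤ 1) :
    sInf {z : ℝ | ∃ x₁ y₁ x₂ y₂ : ℝ,
        0 ≤ x₁ ∧ 0 ≤ y₁ ∧ x₁ + y₁ ≤ d ∧
        0 ≤ x₂ ∧ 0 ≤ y₂ ∧ x₂ + y₂ ≤ d ∧
        z = rbar α x₁ y₁ x₂ y₂} =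
      min (1 - d)
        (min (max (1 - α/2 - d) ((1 - d + α)/4))
          (max (α - d) (max (1 - α - d) ((1 + α - d)/3)))) := by
  set S : Set ℝ := {z : ℝ | ∃ x₁ y₁ x₂ y₂ : ℝ,
        0 ≤ x₁ ∧ 0 ≤ y₁ ∧ x₁ + y₁ ≤ d ∧
        0 ≤ x₂ ∧ 0 ≤ y₂ ∧ x₂ + y₂ ≤ d ∧
        z = rbar α x₁ y₁ x₂ y₂} with hS
  have hbdd : BddBelow S := by
    refine ⟨0, fun z hz => ?_⟩
    obtain ⟨x₁, y₁, x₂, y₂, _, _, _, _, _, _, rfl⟩ := hz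
    exact rbar_nonneg α x₁ y₁ x₂ y₂
  have hne : S.Nonempty :=
    ⟨rbar α 0 0 0 0, 0, 0, 0, 0, le_rfl, le_rfl, by linarith, le_rfl, le_rfl,
      by linarith, rfl⟩
  apply le_antisymm
  · -- upper bound
    refine le_min ?_ (le_min ?_ ?_)
    · -- ≤ 1 - d  via point (d,0,0,0)
      have hmem : rbar α d 0 0 0 ∈ S :=
        ⟨d, 0, 0, 0, hd₁, le_rfl, by linarith, le_rfl, le_rfl, by linarith, rfl⟩
      refine le_trans (csInf_le hbdd hmem) ?_
      rw [rbar_def]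
      exact le_trans (min_le_left _ _) (max_le le_rfl (by linarith))
    · -- ≤ max (1-α/2-d) ((1-d+α)/4)
      rcases le_total (α + d) 1 with hc | hc
      · have hmem : rbar α d 0 d 0 ∈ S :=
          ⟨d, 0, d, 0, hd₁, le_rfl, by linarith, hd₁, le_rfl, by linarith, rfl⟩
        refine le_trans (csInf_le hbdd hmem) (le_trans ?_ (le_max_left _ _))
        rw [rbar_def]
        refine le_trans ((min_le_right _ _).trans ((min_le_right _ _).trans
          (min_le_left _ _))) ?_
        have e1 : max (1 - α - d + 0) 0 ≤ 1 - α - d := max_le (by linarith) (by linarith)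
        have e2 : max (max (1 - d) (α - 0)) 0 ≤ 1 - d :=
          max_le (max_le le_rfl (by linarith)) (by linarith)
        linarith
      · have hmem : rbar α d 0 ((1 + d - α)/2) ((α + d - 1)/2) ∈ S :=
          ⟨d, 0, (1 + d - α)/2, (α + d - 1)/2, hd₁, le_rfl, by linarith,
            by linarith, by linarith, by linarith, rfl⟩
        refine le_trans (csInf_le hbdd hmem) (le_trans ?_ (le_max_right _ _))
        rw [rbar_def]
        refine le_trans ((min_le_right _ _).trans ((min_le_right _ _).trans
          (min_le_left _ _))) ?_
        have e1 : max (1 - α - d + (α + d - 1)/2) 0 ≤ 0 := max_le (by linarith) le_rfl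
        have e2 : max (max (1 - (1 + d - α)/2) (α - (α + d - 1)/2)) 0 ≤ (1 + α - d)/2 :=
          max_le (max_le (by linarith) (by linarith)) (by linarith)
        linarith
    · -- ≤ max (α-d) (max (1-α-d) ((1+α-d)/3))
      rcases le_total (2*α + d) 1 with hc | hc
      · -- point (d,0,d,0), value 1-α-d
        have hmem : rbar α d 0 d 0 ∈ S :=
          ⟨d, 0, d, 0, hd₁, le_rfl, by linarith, hd₁, le_rfl, by linarith, rfl⟩
        refine le_trans (csInf_le hbdd hmem)
          (le_trans ?_ ((le_max_left _ _).trans (le_max_right _ _)))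
        rw [rbar_def]
        refine le_trans ((min_le_right _ _).trans ((min_le_right _ _).trans
          ((min_le_right _ _).trans ((min_le_right _ _).trans (min_le_left _ _))))) ?_
        have e1 : max (max (1 - α - d + 0) (α - 0)) 0 ≤ 1 - α - d :=
          max_le (max_le (by linarith) (by linarith)) (by linarith)
        linarith
      · rcases le_total (2*α) (1 + 2*d) with hc' | hc'
        · -- middle: point (x,y,x,y) with y = (2α+d-1)/3
          have hmem : rbar α ((2*d - 2*α + 1)/3) ((2*α + d - 1)/3)
              ((2*d - 2*α + 1)/3) ((2*α + d - 1)/3) ∈ S :=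
            ⟨(2*d - 2*α + 1)/3, (2*α + d - 1)/3, (2*d - 2*α + 1)/3, (2*α + d - 1)/3,
              by linarith, by linarith, by linarith, by linarith, by linarith,
              by linarith, rfl⟩
          refine le_trans (csInf_le hbdd hmem)
            (le_trans ?_ ((le_max_right _ _).trans (le_max_right _ _)))
          rw [rbar_def]
          refine le_trans ((min_le_right _ _).trans ((min_le_right _ _).trans
            ((min_le_right _ _).trans ((min_le_right _ _).trans (min_le_left _ _))))) ?_
          have e1 : max (max (1 - α - (2*d - 2*α + 1)/3 + (2*α + d - 1)/3)
              (α - (2*α + d - 1)/3)) 0 ≤ (1 + α - d)/3 :=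
            max_le (max_le (by linarith) (by linarith)) (by linarith)
          linarith
        · -- point (0,d,0,d), value α - d
          have hmem : rbar α 0 d 0 d ∈ S :=
            ⟨0, d, 0, d, le_rfl, hd₁, by linarith, le_rfl, hd₁, by linarith, rfl⟩
          refine le_trans (csInf_le hbdd hmem) (le_trans ?_ (le_max_left _ _))
          rw [rbar_def]
          refine le_trans ((min_le_right _ _).trans ((min_le_right _ _).trans
            ((min_le_right _ _).trans ((min_le_right _ _).trans (min_le_left _ _))))) ?_
          have e1 : max (max (1 - α - 0 + d) (α - d)) 0 ≤ α - d :=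
            max_le (max_le (by linarith) (by linarith)) (by linarith)
          linarith
  · -- lower bound
    refine le_csInf hne ?_
    rintro z ⟨x₁, y₁, x₂, y₂, hx₁, hy₁, hs₁, hx₂, hy₂, hs₂, rfl⟩
    rw [rbar_def]
    have hA : min (1 - d) (min (max (1 - α/2 - d) ((1 - d + α)/4))
        (max (α - d) (max (1 - α - d) ((1 + α - d)/3)))) ≤ 1 - d := min_le_left _ _
    have hB : min (1 - d) (min (max (1 - α/2 - d) ((1 - d + α)/4))
        (max (α - d) (max (1 - α - d) ((1 + α - d)/3))))
        ≤ max (1 - α/2 - d) ((1 - d + α)/4) :=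
      (min_le_right _ _).trans (min_le_left _ _)
    have hC : min (1 - d) (min (max (1 - α/2 - d) ((1 - d + α)/4))
        (max (α - d) (max (1 - α - d) ((1 + α - d)/3))))
        ≤ max (α - d) (max (1 - α - d) ((1 + α - d)/3)) :=
      (min_le_right _ _).trans (min_le_right _ _)
    have h11a : 1 - α - x₁ + y₂ ≤ max (1 - α - x₁ + y₂) 0 := le_max_left _ _
    have h11b : (0:ℝ) ≤ max (1 - α - x₁ + y₂) 0 := le_max_right _ _
    have h21a : 1 - α - x₂ + y₁ ≤ max (1 - α - x₂ + y₁) 0 := le_max_left _ _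
    have h21b : (0:ℝ) ≤ max (1 - α - x₂ + y₁) 0 := le_max_right _ _
    have h13a : 1 - α - x₁ + y₂ ≤ max (max (1 - α - x₁ + y₂) (α - y₁)) 0 :=
      (le_max_left _ _).trans (le_max_left _ _)
    have h13b : α - y₁ ≤ max (max (1 - α - x₁ + y₂) (α - y₁)) 0 :=
      (le_max_right _ _).trans (le_max_left _ _)
    have h14a : 1 - x₁ ≤ max (max (1 - x₁) (α - y₁)) 0 :=
      (le_max_left _ _).trans (le_max_left _ _)
    have h14b : α - y₁ ≤ max (max (1 - x₁) (α - y₁)) 0 :=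
      (le_max_right _ _).trans (le_max_left _ _)
    have h23a : 1 - α - x₂ + y₁ ≤ max (max (1 - α - x₂ + y₁) (α - y₂)) 0 :=
      (le_max_left _ _).trans (le_max_left _ _)
    have h23b : α - y₂ ≤ max (max (1 - α - x₂ + y₁) (α - y₂)) 0 :=
      (le_max_right _ _).trans (le_max_left _ _)
    have h24a : 1 - x₂ ≤ max (max (1 - x₂) (α - y₂)) 0 :=
      (le_max_left _ _).trans (le_max_left _ _)
    have h24b : α - y₂ ≤ max (max (1 - x₂) (α - y₂)) 0 :=
      (le_max_right _ _).trans (le_max_left _ _)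
    refine le_min ?_ (le_min ?_ (le_min ?_ (le_min ?_ (le_min ?_ (le_min ?_ ?_)))))
    · exact hA.trans ((by linarith : (1:ℝ) - d ≤ 1 - x₁).trans (le_max_left _ _))
    · exact hA.trans ((by linarith : (1:ℝ) - d ≤ 1 - x₂).trans (le_max_left _ _))
    · exact hB.trans (max_le (by linarith) (by linarith))
    · exact hB.trans (max_le (by linarith) (by linarith))
    · exact hC.trans (max_le (by linarith) (max_le (by linarith) (by linarith)))
    · rcases le_total α (2/3) with hc | hc
      · exact hC.trans (max_le (by linarith) (max_le (by linarith) (by linarith)))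
      · exact hB.trans (max_le (by linarith) (by linarith))
    · rcases le_total α (2/3) with hc | hc
      · exact hC.trans (max_le (by linarith) (max_le (by linarith) (by linarith)))
      · exact hB.trans (max_le (by linarith) (by linarith))
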